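/- Fix q∈(0,1), M≥0 and T>0. For each partition 0=t_0<t_1<…<t_N=T with steps λ_k=t_k−t_{k−1} and mesh ε:=max_k λ_k, define θ_0=M and, recursively for k=1,…,N, let θ_k be the unique real number with θ_k+λ_k θ_k|θ_k|^{q−1}=θ_{k−1} (so θ_k≥0 and θ_k+λ_k θ_k^q=θ_{k−1}), and let θ_ε:[0,T]→ℝ be the piecewise-constant interpolant θ_ε(t)=θ_k for t∈(t_{k−1},t_k], θ_ε(0)=M. Let θ(t)=[M^{1−q}−(1−q)t]_+^{1/(1−q)}. Then for every t∈[0,T], |θ_ε(t)−θ(t)|→0 as the mesh ε→0. -/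

import Mathlib

open Real

lemma stmt18_aux_rpow_sub_le {p B u v : ℝ} (hp : 1 ≤ p) (hu : 0 ≤ u) (huv : u ≤ v)
    (hvB : v ≤ B) : v ^ p - u ^ p ≤ p * B ^ (p - 1) * (v - u) := by
  rcases eq_or_lt_of_le (hu.trans huv) with hv | hv
  · have : u = 0 := le_antisymm (huv.trans hv.symm.le) hu
    rw [← hv, this]; simp
  · have hs : -1 ≤ u / v - 1 := by
      have : 0 ≤ u / v := div_nonneg hu hv.le
      linarith
    have hber := one_add_mul_self_le_rpow_one_add hs hp
    have h1 : 1 + (u / v - 1) = u / v := by ring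
    rw [h1, Real.div_rpow hu hv.le] at hber
    have hvp : 0 < v ^ p := Real.rpow_pos_of_pos hv p
    have h2 : (1 + p * (u / v - 1)) * v ^ p ≤ u ^ p := by
      calc (1 + p * (u / v - 1)) * v ^ p ≤ (u ^ p / v ^ p) * v ^ p :=
            mul_le_mul_of_nonneg_right hber hvp.le
        _ = u ^ p := by field_simp
    have hkey : v ^ (p - 1) * v = v ^ p := by
      rw [← Real.rpow_add_one hv.ne' (p - 1)]; norm_num
    have h3 : v ^ p * (u / v) = v ^ (p - 1) * u := by
      rw [← hkey]; field_simp
    have h3p : p * (v ^ p * (u / v)) = p * (v ^ (p - 1) * u) := by rw [h3]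
    have hkeyp : p * (v ^ (p - 1) * v) = p * v ^ p := by rw [hkey]
    have h4 : v ^ p - u ^ p ≤ p * (v ^ (p - 1)) * (v - u) := by nlinarith [h2, h3p, hkeyp]
    have h5 : v ^ (p - 1) ≤ B ^ (p - 1) :=
      Real.rpow_le_rpow hv.le hvB (by linarith)
    have h6 : v ^ (p - 1) * (v - u) ≤ B ^ (p - 1) * (v - u) :=
      mul_le_mul_of_nonneg_right h5 (by linarith)
    have h7 : p * (v ^ (p - 1) * (v - u)) ≤ p * (B ^ (p - 1) * (v - u)) :=
      mul_le_mul_of_nonneg_left h6 (by linarith)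
    nlinarith [h4, h7]

lemma stmt18_aux_div_lt {a b : ℝ} (ha : 0 ≤ a) (hb : 0 < b) :
    a * (b / (2 * (a + 1))) < b / 2 := by
  have h1 : a * (b / (2 * (a + 1))) = (a / (a + 1)) * (b / 2) := by
    rw [mul_div_assoc', div_mul_div_comm, mul_comm (a + 1) 2]
  rw [h1]
  have h2 : a / (a + 1) < 1 := (div_lt_one (by linarith)).2 (by linarith)
  nlinarith

set_option maxHeartbeats 1000000 in
theorem stmt18 (q M T : ℝ) (hq0 : 0 < q) (hq1 : q < 1) (hM : 0 ≤ M) (hT : 0 < T) :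
    ∀ t ∈ Set.Icc 0 T, ∀ η > (0 : ℝ), ∃ ε₀ > (0 : ℝ),
      ∀ (N : ℕ) (tk : ℕ → ℝ) (θ : ℕ → ℝ),
        1 ≤ N → tk 0 = 0 → tk N = T →
        (∀ k, k < N → tk k < tk (k + 1)) →
        (∀ k, k < N → tk (k + 1) - tk k ≤ ε₀) →
        θ 0 = M →
        (∀ k, 1 ≤ k → k ≤ N →
          θ k + (tk k - tk (k - 1)) * (θ k * |θ k| ^ (q - 1)) = θ (k - 1)) →
        ∀ k, 1 ≤ k → k ≤ N → tk (k - 1) < t → t ≤ tk k →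
          |θ k - (max (M ^ (1 - q) - (1 - q) * t) 0) ^ (1 / (1 - q))| < η := by
  intro t ht η hη
  have h1q : 0 < 1 - q := by linarith
  set p := 1 / (1 - q) with hp_def
  have hp1 : 1 ≤ p := by rw [hp_def, le_div_iff₀ h1q]; linarith
  have hMq : 0 ≤ M ^ (1 - q) := Real.rpow_nonneg hM _
  set B := M ^ (1 - q) + 1 with hB_def
  have hB : 0 < B := by rw [hB_def]; linarith
  set L := p * B ^ (p - 1) with hL_def
  have hL : 0 < L := mul_pos (lt_of_lt_of_le one_pos hp1) (Real.rpow_pos_of_pos hB _)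
  set c := η / 2 with hc_def
  have hc : 0 < c := by rw [hc_def]; positivity
  set C2 := (1 - q) * T * M ^ q / c with hC2_def
  have hC2 : 0 ≤ C2 := by
    rw [hC2_def]
    exact div_nonneg (mul_nonneg (mul_nonneg h1q.le hT.le) (Real.rpow_nonneg hM q)) hc.le
  set D := M ^ (1 - q) - (1 - q) * t with hD_def
  set e := min (η / (2 * (L * (1 - q) + 1))) (min (η / (2 * (L * C2 + 1))) (1 / (C2 + 1)))
    with he_def
  clear_value p B L c C2 D e
  have hLq : 0 ≤ L * (1 - q) := mul_nonneg hL.le h1q.le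
  have hLC2 : 0 ≤ L * C2 := mul_nonneg hL.le hC2
  have he_pos : 0 < e := by
    rw [he_def]
    exact lt_min (div_pos hη (by linarith))
      (lt_min (div_pos hη (by linarith)) (div_pos one_pos (by linarith)))
  have He1 : L * ((1 - q) * e) < η / 2 := by
    have h1 : e ≤ η / (2 * (L * (1 - q) + 1)) := by rw [he_def]; exact min_le_left _ _
    have h2 : L * ((1 - q) * e) = (L * (1 - q)) * e := by ring
    rw [h2]
    calc (L * (1 - q)) * e ≤ (L * (1 - q)) * (η / (2 * (L * (1 - q) + 1))) :=
          mul_le_mul_of_nonneg_left h1 hLq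
      _ < η / 2 := stmt18_aux_div_lt hLq hη
  have He2 : L * (C2 * e) < η / 2 := by
    have h1 : e ≤ η / (2 * (L * C2 + 1)) := by
      rw [he_def]; exact le_trans (min_le_right _ _) (min_le_left _ _)
    have h2 : L * (C2 * e) = (L * C2) * e := by ring
    rw [h2]
    calc (L * C2) * e ≤ (L * C2) * (η / (2 * (L * C2 + 1))) :=
          mul_le_mul_of_nonneg_left h1 hLC2
      _ < η / 2 := stmt18_aux_div_lt hLC2 hη
  have He3 : C2 * e ≤ 1 := by
    have h1 : e ≤ 1 / (C2 + 1) := by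
      rw [he_def]; exact le_trans (min_le_right _ _) (min_le_right _ _)
    calc C2 * e ≤ C2 * (1 / (C2 + 1)) := mul_le_mul_of_nonneg_left h1 hC2
      _ ≤ 1 := by rw [mul_one_div, div_le_one (by linarith)]; linarith
  refine ⟨e, he_pos, ?_⟩
  intro N tk θ hN htk0 htkN hmono hmesh hθ0 hrec k hk1 hkN hkt htk
  -- basic facts about the partition
  have tkmono : ∀ i j : ℕ, i ≤ j → j ≤ N → tk i ≤ tk j := by
    intro i j hij hjN
    induction j with
    | zero => have : i = 0 := Nat.le_zero.mp hij; rw [this]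
    | succ n ih =>
      rcases Nat.lt_or_ge i (n + 1) with h | h
      · have h1 := ih (Nat.lt_succ_iff.mp h) (by omega)
        have h2 := (hmono n (by omega)).le
        linarith
      · have : i = n + 1 := le_antisymm hij h
        rw [this]
  have tk_nonneg : ∀ j, j ≤ N → 0 ≤ tk j := by
    intro j hj; rw [← htk0]; exact tkmono 0 j (Nat.zero_le j) hj
  have tk_le_T : ∀ j, j ≤ N → tk j ≤ T := by
    intro j hj; rw [← htkN]; exact tkmono j N hj le_rfl
  -- nonnegativity of θ
  have pos : ∀ j, j ≤ N → 0 ≤ θ j := by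
    intro j
    induction j with
    | zero => intro _; rw [hθ0]; exact hM
    | succ n ih =>
      intro hn
      have h0 : 0 ≤ θ n := ih (by omega)
      have heq := hrec (n + 1) (by omega) hn
      simp only [Nat.add_sub_cancel] at heq
      by_contra hneg
      push_neg at hneg
      have habs : 0 < |θ (n + 1)| := abs_pos.mpr (by linarith)
      have hpow : 0 < |θ (n + 1)| ^ (q - 1) := Real.rpow_pos_of_pos habs _
      have hlam : 0 < tk (n + 1) - tk n := sub_pos.2 (hmono n (by omega))
      nlinarith [mul_neg_of_pos_of_neg hlam (mul_neg_of_neg_of_pos hneg hpow)]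
  -- recursion in rpow form
  have eq' : ∀ j, j < N → θ (j + 1) + (tk (j + 1) - tk j) * (θ (j + 1)) ^ q = θ j := by
    intro j hj
    have heq := hrec (j + 1) (by omega) (by omega)
    simp only [Nat.add_sub_cancel] at heq
    have h0 : 0 ≤ θ (j + 1) := pos (j + 1) (by omega)
    rcases eq_or_lt_of_le h0 with h | h
    · rw [← h] at heq ⊢
      simpa [Real.zero_rpow hq0.ne'] using heq
    · have habs : |θ (j + 1)| = θ (j + 1) := abs_of_pos h
      rw [habs] at heq
      have hxx : θ (j + 1) * θ (j + 1) ^ (q - 1) = θ (j + 1) ^ q := by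
        have h2 := Real.rpow_add h 1 (q - 1)
        rw [Real.rpow_one] at h2
        rw [← h2]; norm_num
      rw [hxx] at heq; exact heq
  -- monotone decreasing
  have mono : ∀ j, j < N → θ (j + 1) ≤ θ j := by
    intro j hj
    have heq := eq' j hj
    have h0 : 0 ≤ (θ (j + 1)) ^ q := Real.rpow_nonneg (pos (j + 1) (by omega)) q
    have hlam : 0 < tk (j + 1) - tk j := sub_pos.2 (hmono j hj)
    nlinarith
  have anti : ∀ i j : ℕ, i ≤ j → j ≤ N → θ j ≤ θ i := by
    intro i j hij hjN
    induction j with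
    | zero => have : i = 0 := Nat.le_zero.mp hij; rw [this]
    | succ n ih =>
      rcases Nat.lt_or_ge i (n + 1) with h | h
      · have h1 := ih (Nat.lt_succ_iff.mp h) (by omega)
        have h2 := mono n (by omega)
        linarith
      · have : i = n + 1 := le_antisymm hij h
        rw [this]
  have bdM : ∀ j, j ≤ N → θ j ≤ M := by
    intro j hj; rw [← hθ0]; exact anti 0 j (Nat.zero_le j) hj
  -- lower bound : discrete solution lies above the exact one
  have low : ∀ j, j ≤ N → M ^ (1 - q) - (1 - q) * tk j ≤ (θ j) ^ (1 - q) := by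
    intro j
    induction j with
    | zero => intro _; rw [hθ0, htk0]; simp
    | succ n ih =>
      intro hn
      have ihn := ih (by omega)
      have heq := eq' n (by omega)
      have hx0 : 0 ≤ θ (n + 1) := pos _ hn
      have hlam : 0 < tk (n + 1) - tk n := sub_pos.2 (hmono n (by omega))
      rcases eq_or_lt_of_le hx0 with h | h
      · have hθn : θ n = 0 := by
          rw [← heq, ← h]; simp [Real.zero_rpow hq0.ne']
        rw [hθn] at ihn
        rw [Real.zero_rpow (ne_of_gt h1q)] at ihn
        rw [← h, Real.zero_rpow (ne_of_gt h1q)]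
        nlinarith [mul_le_mul_of_nonneg_left (hmono n (by omega)).le h1q.le]
      · set x := θ (n + 1) with hxdef
        set lam := tk (n + 1) - tk n with hlamdef
        clear_value x lam
        have hxx : x * x ^ (q - 1) = x ^ q := by
          have h2 := Real.rpow_add h 1 (q - 1)
          rw [Real.rpow_one] at h2
          rw [← h2]; norm_num
        have hfac : θ n = x * (1 + lam * x ^ (q - 1)) := by
          rw [← heq, mul_add, mul_one, ← mul_assoc, mul_comm x lam, mul_assoc, hxx]
        have hs0 : 0 ≤ lam * x ^ (q - 1) :=
          mul_nonneg hlam.le (Real.rpow_nonneg h.le _)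
        have hrw : (θ n) ^ (1 - q) = x ^ (1 - q) * (1 + lam * x ^ (q - 1)) ^ (1 - q) := by
          rw [hfac, Real.mul_rpow h.le (by linarith)]
        have hber := rpow_one_add_le_one_add_mul_self
          (by linarith : (-1 : ℝ) ≤ lam * x ^ (q - 1)) h1q.le (by linarith : 1 - q ≤ 1)
        have hmul : x ^ (1 - q) * (1 + lam * x ^ (q - 1)) ^ (1 - q)
            ≤ x ^ (1 - q) * (1 + (1 - q) * (lam * x ^ (q - 1))) :=
          mul_le_mul_of_nonneg_left hber (Real.rpow_nonneg h.le _)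
        have hone : x ^ (1 - q) * x ^ (q - 1) = 1 := by
          have hze : (1 - q) + (q - 1) = 0 := by ring
          rw [← Real.rpow_add h, hze, Real.rpow_zero]
        have hexp : x ^ (1 - q) * (1 + (1 - q) * (lam * x ^ (q - 1)))
            = x ^ (1 - q) + (1 - q) * lam * (x ^ (1 - q) * x ^ (q - 1)) := by ring
        rw [hexp, hone, mul_one] at hmul
        rw [hrw] at ihn
        have hfinal := le_trans ihn hmul
        have hlam_eq : lam = tk (n + 1) - tk n := hlamdef
        have hlin : (1 - q) * lam = (1 - q) * tk (n + 1) - (1 - q) * tk n := by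
          rw [hlam_eq]; ring
        linarith [hfinal, hlin]
  -- upper bound while the solution stays above c
  have up : ∀ j, j ≤ N → c ≤ θ j →
      (θ j) ^ (1 - q) ≤ M ^ (1 - q) - (1 - q) * tk j + (1 - q) * (e * M ^ q / c) * tk j := by
    intro j
    induction j with
    | zero =>
      intro _ _; rw [hθ0, htk0]; simp
    | succ n ih =>
      intro hn hc1
      have hmn : θ (n + 1) ≤ θ n := mono n (by omega)
      have hcn : c ≤ θ n := le_trans hc1 hmn
      have ihn := ih (by omega) hcn
      have hx0 : 0 < θ (n + 1) := lt_of_lt_of_le hc hc1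
      have ha0 : 0 < θ n := lt_of_lt_of_le hc hcn
      have heq := eq' n (by omega)
      set x := θ (n + 1) with hxdef
      set a := θ n with hadef
      set lam := tk (n + 1) - tk n with hlamdef
      clear_value x a lam
      have hlam : 0 < lam := by rw [hlamdef]; exact sub_pos.2 (hmono n (by omega))
      have hs : -1 ≤ (x - a) / a := by
        have h1 : 0 ≤ x / a := div_nonneg hx0.le ha0.le
        have h2 : (x - a) / a = x / a - 1 := by
          rw [sub_div, div_self ha0.ne']
        linarith
      have hpos1 : 0 ≤ 1 + (x - a) / a := by
        have h2 : (x - a) / a = x / a - 1 := by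
          rw [sub_div, div_self ha0.ne']
        rw [h2]
        have := div_nonneg hx0.le ha0.le
        linarith
      have hrw : x ^ (1 - q) = a ^ (1 - q) * (1 + (x - a) / a) ^ (1 - q) := by
        have hfac : x = a * (1 + (x - a) / a) := by
          have h2 : (x - a) / a = x / a - 1 := by
            rw [sub_div, div_self ha0.ne']
          rw [h2]
          rw [show (1 + (x / a - 1)) = x / a by ring, mul_comm, div_mul_cancel₀ x ha0.ne']
        conv_lhs => rw [hfac]
        rw [Real.mul_rpow ha0.le hpos1]
      have hber := rpow_one_add_le_one_add_mul_self hs h1q.le (by linarith : 1 - q ≤ 1)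
      have hmul : x ^ (1 - q) ≤ a ^ (1 - q) * (1 + (1 - q) * ((x - a) / a)) := by
        rw [hrw]; exact mul_le_mul_of_nonneg_left hber (Real.rpow_nonneg ha0.le _)
      have hxa : x - a = -(lam * x ^ q) := by linarith
      have haq : a ^ (1 - q) / a = a ^ (-q) := by
        rw [← Real.rpow_sub_one ha0.ne']; congr 1; ring
      have hratio : x ^ q * a ^ (-q) = (x / a) ^ q := by
        rw [Real.div_rpow hx0.le ha0.le, Real.rpow_neg ha0.le, div_eq_mul_inv]
      have hkey : a ^ (1 - q) * ((x - a) / a) = -(lam * (x / a) ^ q) := by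
        calc a ^ (1 - q) * ((x - a) / a) = (x - a) * (a ^ (1 - q) / a) := by ring
          _ = (x - a) * a ^ (-q) := by rw [haq]
          _ = -(lam * (x ^ q * a ^ (-q))) := by rw [hxa]; ring
          _ = -(lam * (x / a) ^ q) := by rw [hratio]
      have hstep : x ^ (1 - q) ≤ a ^ (1 - q) - (1 - q) * lam * (x / a) ^ q := by
        have hexp : a ^ (1 - q) * (1 + (1 - q) * ((x - a) / a))
            = a ^ (1 - q) + (1 - q) * (a ^ (1 - q) * ((x - a) / a)) := by ring
        rw [hexp, hkey] at hmul; linarith only [hmul]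
      have hxM : x ≤ M := by rw [hxdef]; exact bdM (n + 1) hn
      have hxq : x ^ q ≤ M ^ q := Real.rpow_le_rpow hx0.le hxM hq0.le
      have hr1 : x / a ≤ 1 := (div_le_one ha0).2 hmn
      have hr0 : 0 < x / a := div_pos hx0 ha0
      have hrq : x / a ≤ (x / a) ^ q := by
        have h2 := Real.rpow_le_rpow_of_exponent_ge hr0 hr1 (le_of_lt hq1)
        rwa [Real.rpow_one] at h2
      have hfrac : 1 - e * M ^ q / c ≤ x / a := by
        have h1 : x / a = 1 - lam * x ^ q / a := by
          rw [eq_sub_iff_add_eq, ← add_div, div_eq_one_iff_eq ha0.ne']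
          exact heq
        have hlam_le : lam ≤ e := by rw [hlamdef]; exact hmesh n (by omega)
        have hnum : lam * x ^ q ≤ e * M ^ q :=
          mul_le_mul hlam_le hxq (Real.rpow_nonneg hx0.le q) he_pos.le
        have hda : lam * x ^ q / a ≤ e * M ^ q / c :=
          div_le_div₀ (mul_nonneg he_pos.le (Real.rpow_nonneg hM q)) hnum hc hcn
        linarith only [h1, hda]
      have hstep2 : x ^ (1 - q) ≤ a ^ (1 - q) - (1 - q) * lam * (1 - e * M ^ q / c) := by
        have h2 : 1 - e * M ^ q / c ≤ (x / a) ^ q := le_trans hfrac hrq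
        have h3 := mul_le_mul_of_nonneg_left h2 (mul_nonneg h1q.le hlam.le)
        linarith only [hstep, h3]
      have hring : a ^ (1 - q) - (1 - q) * (tk (n + 1) - tk n) * (1 - e * M ^ q / c)
          = a ^ (1 - q)
            - (M ^ (1 - q) - (1 - q) * tk n + (1 - q) * (e * M ^ q / c) * tk n)
            + (M ^ (1 - q) - (1 - q) * tk (n + 1) + (1 - q) * (e * M ^ q / c) * tk (n + 1)) := by
        ring
      have hlam_eq : lam = tk (n + 1) - tk n := hlamdef
      rw [hlam_eq] at hstep2
      linarith only [hstep2, ihn, hring]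
  -- assembly
  have hkN' : k - 1 < N := by omega
  have hk_eq : k - 1 + 1 = k := by omega
  have hlamk : tk k - tk (k - 1) ≤ e := by
    have h := hmesh (k - 1) hkN'
    rwa [hk_eq] at h
  have htkk_le : tk k ≤ t + e := by linarith
  have hθk0 : 0 ≤ θ k := pos k hkN
  have hθk_id : ((θ k) ^ (1 - q)) ^ p = θ k := by
    rw [← Real.rpow_mul hθk0]
    have h1 : (1 - q) * p = 1 := by rw [hp_def]; field_simp
    rw [h1, Real.rpow_one]
  have hDle : D ≤ M ^ (1 - q) := by
    rw [hD_def]; nlinarith [mul_nonneg h1q.le ht.1]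
  have hc' : c ≠ 0 := ne_of_gt hc
  rw [abs_sub_lt_iff]
  constructor
  · -- upper bound branch
    rcases lt_or_ge (θ k) c with hcase | hcase
    · have h0 : 0 ≤ (max D 0) ^ p := Real.rpow_nonneg (le_max_right D 0) p
      rw [hc_def] at hcase
      linarith
    · have hup := up k hkN hcase
      have htkT := tk_le_T k hkN
      have hcoef : 0 ≤ (1 - q) * (e * M ^ q / c) :=
        mul_nonneg h1q.le (div_nonneg (mul_nonneg he_pos.le (Real.rpow_nonneg hM q)) hc.le)
      have ha1 : (1 - q) * t ≤ (1 - q) * tk k := mul_le_mul_of_nonneg_left htk h1q.le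
      have ha2 : (1 - q) * (e * M ^ q / c) * tk k ≤ (1 - q) * (e * M ^ q / c) * T :=
        mul_le_mul_of_nonneg_left htkT hcoef
      have ha3 : (1 - q) * (e * M ^ q / c) * T = C2 * e := by
        rw [hC2_def]; field_simp
      have h1 : (θ k) ^ (1 - q) ≤ D + C2 * e := by
        rw [hD_def]; linarith
      have hC2e : 0 ≤ C2 * e := mul_nonneg hC2 he_pos.le
      have h2 : θ k ≤ (max (D + C2 * e) 0) ^ p := by
        rw [← hθk_id]
        exact Real.rpow_le_rpow (Real.rpow_nonneg hθk0 _)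
          (le_trans h1 (le_max_left _ _)) (by linarith)
      have h3 : max (D + C2 * e) 0 ≤ B := by
        apply max_le _ hB.le
        rw [hB_def]; linarith
      have h4 : max D 0 ≤ max (D + C2 * e) 0 := max_le_max (by linarith) le_rfl
      have h5 := stmt18_aux_rpow_sub_le hp1 (le_max_right D 0) h4 h3
      rw [← hL_def] at h5
      have h6 : max (D + C2 * e) 0 - max D 0 ≤ C2 * e := by
        rcases le_or_gt (D + C2 * e) 0 with h | h
        · rw [max_eq_right h]
          have := le_max_right D 0
          linarith
        · rw [max_eq_left h.le]
          have := le_max_left D 0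
          linarith
      have h7 : L * (max (D + C2 * e) 0 - max D 0) ≤ L * (C2 * e) :=
        mul_le_mul_of_nonneg_left h6 hL.le
      linarith only [h2, h5, h7, He2, hη]
  · -- lower bound branch
    have hlow0 := low k hkN
    have ha1 : (1 - q) * tk k ≤ (1 - q) * (t + e) := mul_le_mul_of_nonneg_left htkk_le h1q.le
    have hlow : D - (1 - q) * e ≤ (θ k) ^ (1 - q) := by
      rw [hD_def]; nlinarith [hlow0, ha1]
    have hqe : 0 ≤ (1 - q) * e := mul_nonneg h1q.le he_pos.le
    have hu_le_v : max (D - (1 - q) * e) 0 ≤ max D 0 := max_le_max (by linarith) le_rfl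
    have hvB : max D 0 ≤ B := max_le (by rw [hB_def]; linarith) hB.le
    have h1 : (max (D - (1 - q) * e) 0) ^ p ≤ θ k := by
      rw [← hθk_id]
      exact Real.rpow_le_rpow (le_max_right _ 0)
        (max_le hlow (Real.rpow_nonneg hθk0 _)) (by linarith)
    have h2 := stmt18_aux_rpow_sub_le hp1 (le_max_right _ 0) hu_le_v hvB
    rw [← hL_def] at h2
    have h3 : max D 0 - max (D - (1 - q) * e) 0 ≤ (1 - q) * e := by
      rcases le_or_gt D 0 with h | h
      · rw [max_eq_right h]
        have := le_max_right (D - (1 - q) * e) 0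
        linarith
      · rw [max_eq_left h.le]
        have := le_max_left (D - (1 - q) * e) 0
        linarith
    have h4 : L * (max D 0 - max (D - (1 - q) * e) 0) ≤ L * ((1 - q) * e) :=
      mul_le_mul_of_nonneg_left h3 hL.le
    linarith only [h1, h2, h4, He1, hη]
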